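/- arXiv:2605.03238 — 5 statements merged into one kernel-verified Lean document; each statement's English description precedes it below -/
import Mathlib

section
/- Let G be a finite simple graph on vertex set V with maximum degree Δ, and let X = (X_1,…,X_k) be a partition of V. Suppose that for every vertex i with deg(i) ≥ 18k²·ln n and every part j, the number of neighbors of i in X_j lies in the interval [deg(i)/k − 5√(deg(i)·ln n), deg(i)/k + 5√(deg(i)·ln n)]. Then X is (18·max{√Δ, k²}·ln n)-envy-free, i.e., for every vertex i and every part j, E(i, X_j) − u_i(X) ≤ 18·max{√Δ, k²}·ln n, where u_i(X) is the number of neighbors of i in its own part. -/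
/-!
A vertex of degree `d ≥ 18 k² ln n` sees every part within `5 √(d ln n)` of `d / k`, so any two
parts differ by at most `10 √(d ln n) ≤ 18 √Δ ln n`, using `√(ln n) ≤ (9/5) ln n` for `n ≥ 2`.
A vertex of smaller degree has at most `d < 18 k² ln n` neighbours in any part.
-/

open Finset

/-- Number of neighbors of `i` inside the set `S`. -/
def nbrCount {V : Type*} [Fintype V] [DecidableEq V] (G : SimpleGraph V)
    [DecidableRel G.Adj] (i : V) (S : Finset V) : ℕ :=
  (G.neighborFinset i ∩ S).card

theorem nbrCount_le_degree {V : Type*} [Fintype V] [DecidableEq V] (G : SimpleGraph V)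
    [DecidableRel G.Adj] (i : V) (S : Finset V) : nbrCount G i S ≤ G.degree i := by
  rw [← G.card_neighborFinset_eq_degree]
  exact card_le_card inter_subset_left

theorem Real.sqrt_le_nine_fifths_mul {x : ℝ} (hx : 25 / 81 ≤ x) : √x ≤ 9 / 5 * x := by
  rw [Real.sqrt_le_iff]
  constructor <;> nlinarith

theorem Real.twenty_five_div_eighty_one_le_log {n : ℕ} (hn : 2 ≤ n) :
    25 / 81 ≤ Real.log n := by
  have hlog_two_le : Real.log 2 ≤ Real.log n :=
    Real.log_le_log (by norm_num) (by exact_mod_cast hn)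
  linarith [Real.log_two_gt_d9]

theorem ten_sqrt_mul_le {d Δ x : ℝ} (hd : 0 ≤ d) (hdΔ : d ≤ Δ) (hx : 25 / 81 ≤ x) :
    10 * √(d * x) ≤ 18 * √Δ * x :=
  calc 10 * √(d * x) = 10 * (√d * √x) := by rw [Real.sqrt_mul hd]
    _ ≤ 10 * (√Δ * (9 / 5 * x)) := by
      gcongr
      exact Real.sqrt_le_nine_fifths_mul hx
    _ = 18 * √Δ * x := by ring

theorem stmt_0_general {V : Type*} [Fintype V] [DecidableEq V] (G : SimpleGraph V)
    [DecidableRel G.Adj] (n k Δ : ℕ) (hn2 : 2 ≤ n)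
    (hΔ : ∀ v : V, G.degree v ≤ Δ)
    (X : Fin k → Finset V)
    (hconc : ∀ i : V, ∀ j : Fin k,
      (18 : ℝ) * k ^ 2 * Real.log n ≤ G.degree i →
      |(nbrCount G i (X j) : ℝ) - G.degree i / k| ≤
        5 * Real.sqrt (G.degree i * Real.log n)) :
    ∀ i : V, ∀ ji : Fin k, i ∈ X ji → ∀ j : Fin k,
      (nbrCount G i (X j) : ℝ) - nbrCount G i (X ji) ≤
        18 * max (Real.sqrt Δ) ((k : ℝ) ^ 2) * Real.log n := by
  intro i ji _ j
  have hlog := Real.twenty_five_div_eighty_one_le_log hn2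
  by_cases hdeg : (18 : ℝ) * k ^ 2 * Real.log n ≤ G.degree i
  · have hj := abs_le.mp (hconc i j hdeg)
    have hji := abs_le.mp (hconc i ji hdeg)
    calc (nbrCount G i (X j) : ℝ) - nbrCount G i (X ji)
        ≤ 10 * √(G.degree i * Real.log n) := by linarith
      _ ≤ 18 * √Δ * Real.log n := ten_sqrt_mul_le (by positivity) (by exact_mod_cast hΔ i) hlog
      _ ≤ 18 * max √Δ ((k : ℝ) ^ 2) * Real.log n := by gcongr; exact le_max_left _ _
  · have hj : (nbrCount G i (X j) : ℝ) ≤ G.degree i := by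
      exact_mod_cast nbrCount_le_degree G i (X j)
    calc (nbrCount G i (X j) : ℝ) - nbrCount G i (X ji)
        ≤ G.degree i := by linarith [(nbrCount G i (X ji)).cast_nonneg (α := ℝ)]
      _ ≤ 18 * k ^ 2 * Real.log n := (not_le.mp hdeg).le
      _ ≤ 18 * max √Δ ((k : ℝ) ^ 2) * Real.log n := by
        gcongr
        exact le_max_right _ _

theorem stmt_0 {V : Type*} [Fintype V] [DecidableEq V] (G : SimpleGraph V)
    [DecidableRel G.Adj] (n k Δ : ℕ) (hn : n = Fintype.card V) (hn2 : 2 ≤ n)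
    (hk : 1 ≤ k) (hΔ : ∀ v : V, G.degree v ≤ Δ)
    (X : Fin k → Finset V)
    (hpart : ∀ v : V, ∃! j : Fin k, v ∈ X j)
    (hconc : ∀ i : V, ∀ j : Fin k,
      (18 : ℝ) * k ^ 2 * Real.log n ≤ G.degree i →
      |(nbrCount G i (X j) : ℝ) - G.degree i / k| ≤
        5 * Real.sqrt (G.degree i * Real.log n)) :
    ∀ i : V, ∀ ji : Fin k, i ∈ X ji → ∀ j : Fin k,
      (nbrCount G i (X j) : ℝ) - nbrCount G i (X ji) ≤
        18 * max (Real.sqrt Δ) ((k : ℝ) ^ 2) * Real.log n :=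
  stmt_0_general G n k Δ hn2 hΔ X hconc
end

section
/- Let G be a finite simple graph on n ≥ 2 vertices, and let X = (X_1,…,X_k) be a partition of V such that for every vertex i with deg(i) ≥ 18k²·ln n and every part j, E(i, X_j) ≥ deg(i)/k − 5√(deg(i)·ln n). Then there is no set S ⊆ V such that every vertex i ∈ S satisfies E(i,S) > (k + √k)·u_i(X) + 25·k^(5/2)·ln n. -/
/-!
Pick any vertex `i ∈ S`, of degree `d`, lying in the part `X_j`; it suffices to show
`d ≤ (k + √k)·u_i(X) + 25 k^{5/2} ln n`, as `E(i,S) ≤ d`. For small degree this holds because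
`18 k² ln n ≤ 25 k^{5/2} ln n`. For large degree the hypothesis gives `u_i(X) ≥ d/k - 5√(d ln n)`,
and the remaining inequality in `d` is AM-GM.
-/

open Finset

theorem Real.rpow_five_halves {x : ℝ} (hx : 0 ≤ x) : x ^ (5 / 2 : ℝ) = x ^ 2 * √x := by
  rw [show (5 / 2 : ℝ) = (2 : ℕ) + 1 / 2 by norm_num, Real.rpow_add' hx (by norm_num),
    Real.rpow_natCast, Real.sqrt_eq_rpow]

/-- With `s = √k`, `a = √d`, `b = √L`, the difference of the two sides is
`((a - 5 s³ b)² + 5 (s³ - s²) a b) / s`. -/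
theorem self_le_mul_div_sub_sqrt_add {k d L : ℝ} (hk : 1 ≤ k) (hd : 0 ≤ d) (hL : 0 ≤ L) :
    d ≤ (k + √k) * (d / k - 5 * √(d * L)) + 25 * k ^ (5 / 2 : ℝ) * L := by
  obtain ⟨s, hs, rfl⟩ : ∃ s, 1 ≤ s ∧ k = s ^ 2 :=
    ⟨√k, Real.one_le_sqrt.2 hk, (Real.sq_sqrt (by linarith)).symm⟩
  obtain ⟨a, ha, rfl⟩ : ∃ a, 0 ≤ a ∧ d = a ^ 2 := ⟨√d, Real.sqrt_nonneg d, (Real.sq_sqrt hd).symm⟩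
  obtain ⟨b, hb, rfl⟩ : ∃ b, 0 ≤ b ∧ L = b ^ 2 := ⟨√L, Real.sqrt_nonneg L, (Real.sq_sqrt hL).symm⟩
  have hs0 : 0 < s := by linarith
  rw [Real.rpow_five_halves (by positivity), ← mul_pow, Real.sqrt_sq hs0.le,
    Real.sqrt_sq (mul_nonneg ha hb)]
  have hnum : 0 ≤ (a - 5 * s ^ 3 * b) ^ 2 + 5 * (s ^ 3 - s ^ 2) * (a * b) := by
    have : s ^ 2 ≤ s ^ 3 := pow_le_pow_right₀ hs (by norm_num)
    have := mul_nonneg ha hb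
    positivity
  have hdiff : (s ^ 2 + s) * (a ^ 2 / s ^ 2 - 5 * (a * b)) + 25 * ((s ^ 2) ^ 2 * s) * b ^ 2
      - a ^ 2 = ((a - 5 * s ^ 3 * b) ^ 2 + 5 * (s ^ 3 - s ^ 2) * (a * b)) / s := by
    field_simp
    ring
  linarith [div_nonneg hnum hs0.le]

theorem le_mul_add_of_lower_bound {k d L u : ℝ} (hk : 1 ≤ k) (hd : 0 ≤ d) (hL : 0 ≤ L)
    (hu : 0 ≤ u) (hlow : 18 * k ^ 2 * L ≤ d → u ≥ d / k - 5 * √(d * L)) :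
    d ≤ (k + √k) * u + 25 * k ^ (5 / 2 : ℝ) * L := by
  by_cases hlarge : 18 * k ^ 2 * L ≤ d
  · have : 0 ≤ k + √k := by positivity
    exact (self_le_mul_div_sub_sqrt_add hk hd hL).trans (by gcongr; exact hlow hlarge)
  · have : k ^ 2 ≤ k ^ 2 * √k := le_mul_of_one_le_right (by positivity) (Real.one_le_sqrt.2 hk)
    have : 0 ≤ (k + √k) * u := by positivity
    rw [Real.rpow_five_halves (by linarith)]
    nlinarith

theorem stmt_1_general {V : Type*} [Fintype V] [DecidableEq V] (G : SimpleGraph V)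
    [DecidableRel G.Adj] (n k : ℕ) (hn2 : 2 ≤ n)
    (hk : 1 ≤ k)
    (X : Fin k → Finset V)
    (hpart : ∀ v : V, ∃! j : Fin k, v ∈ X j)
    (hlow : ∀ i : V, ∀ j : Fin k,
      (18 : ℝ) * k ^ 2 * Real.log n ≤ G.degree i →
      (nbrCount G i (X j) : ℝ) ≥ G.degree i / k - 5 * Real.sqrt (G.degree i * Real.log n)) :
    ¬ ∃ S : Finset V, S.Nonempty ∧
      ∀ i ∈ S, ∀ ji : Fin k, i ∈ X ji →
        (nbrCount G i S : ℝ) >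
          ((k : ℝ) + Real.sqrt k) * nbrCount G i (X ji) +
            25 * (k : ℝ) ^ ((5 : ℝ) / 2) * Real.log n := by
  rintro ⟨S, ⟨i, hi⟩, hS⟩
  obtain ⟨j, hj, -⟩ := hpart i
  have hlog : 0 ≤ Real.log n := Real.log_nonneg (Nat.one_le_cast.2 (by omega))
  have hdeg : (G.degree i : ℝ) ≤
      (k + √k) * nbrCount G i (X j) + 25 * k ^ (5 / 2 : ℝ) * Real.log n :=
    le_mul_add_of_lower_bound (Nat.one_le_cast.2 hk) (Nat.cast_nonneg _) hlog
      (Nat.cast_nonneg _) (hlow i j)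
  have hS_le_deg : (nbrCount G i S : ℝ) ≤ G.degree i := by
    exact_mod_cast nbrCount_le_degree G i S
  linarith [hS i hi j hj]

theorem stmt_1 {V : Type*} [Fintype V] [DecidableEq V] (G : SimpleGraph V)
    [DecidableRel G.Adj] (n k : ℕ) (hn : n = Fintype.card V) (hn2 : 2 ≤ n)
    (hk : 1 ≤ k)
    (X : Fin k → Finset V)
    (hpart : ∀ v : V, ∃! j : Fin k, v ∈ X j)
    (hlow : ∀ i : V, ∀ j : Fin k,
      (18 : ℝ) * k ^ 2 * Real.log n ≤ G.degree i →
      (nbrCount G i (X j) : ℝ) ≥ G.degree i / k - 5 * Real.sqrt (G.degree i * Real.log n)) :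
    ¬ ∃ S : Finset V, S.Nonempty ∧
      ∀ i ∈ S, ∀ ji : Fin k, i ∈ X ji →
        (nbrCount G i S : ℝ) >
          ((k : ℝ) + Real.sqrt k) * nbrCount G i (X ji) +
            25 * (k : ℝ) ^ ((5 : ℝ) / 2) * Real.log n :=
  stmt_1_general G n k hn2 hk X hpart hlow
end

section
/- Let G = (V,E) be a finite simple graph on n ≥ 7 vertices, and let (X_1, X_2) be a balanced partition of V such that swapping any single vertex of X_1 with any single vertex of X_2 does not decrease the cut size E(X_1, X_2). Then for every set S ⊆ V with |S| ≥ ⌊n/2⌋, max{E(X_1 ∩ S, X_1), E(X_2 ∩ S, X_2)} ≥ ((n−6)/(n−2))·E(X_1 ∩ S, X_2 ∩ S). -/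
open Finset

/-- Number of edges (counted from `A`) between the sets `A` and `B`. -/
def cutCount {V : Type*} [Fintype V] [DecidableEq V] (G : SimpleGraph V)
    [DecidableRel G.Adj] (A B : Finset V) : ℕ :=
  ∑ i ∈ A, nbrCount G i B

section Aux
variable {V : Type*} [Fintype V] [DecidableEq V] (G : SimpleGraph V) [DecidableRel G.Adj]

lemma nbr_int (i : V) (S : Finset V) :
    (nbrCount G i S : ℤ) = ∑ v ∈ S, (if G.Adj i v then (1:ℤ) else 0) := by
  unfold nbrCount
  have h : G.neighborFinset i ∩ S = S.filter (fun v => G.Adj i v) := by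
    ext v; simp [SimpleGraph.mem_neighborFinset, and_comm]
  rw [h, Finset.card_filter]
  push_cast
  simp

lemma cut_int (A B : Finset V) :
    (cutCount G A B : ℤ) = ∑ u ∈ A, ∑ v ∈ B, (if G.Adj u v then (1:ℤ) else 0) := by
  unfold cutCount
  push_cast
  exact Finset.sum_congr rfl fun u _ => nbr_int G u B

lemma cut_symm (A B : Finset V) : cutCount G A B = cutCount G B A := by
  have h : (cutCount G A B : ℤ) = cutCount G B A := by
    rw [cut_int, cut_int, Finset.sum_comm]
    refine Finset.sum_congr rfl fun u _ => Finset.sum_congr rfl fun v _ => ?_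
    simp [G.adj_comm]
  exact_mod_cast h

lemma cut_mono (A : Finset V) {B B' : Finset V} (h : B ⊆ B') :
    cutCount G A B ≤ cutCount G A B' :=
  Finset.sum_le_sum fun i _ => Finset.card_le_card (inter_subset_inter Subset.rfl h)

end Aux

theorem stmt_8 {V : Type*} [Fintype V] [DecidableEq V] (G : SimpleGraph V)
    [DecidableRel G.Adj] (n : ℕ) (hn : n = Fintype.card V) (hn7 : 7 ≤ n)
    (X1 X2 : Finset V) (hdisj : Disjoint X1 X2) (hcover : X1 ∪ X2 = univ)
    (hbal : (X1.card : ℤ) - X2.card ≤ 1 ∧ (X2.card : ℤ) - X1.card ≤ 1)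
    (hswap : ∀ i ∈ X1, ∀ j ∈ X2,
      cutCount G X1 X2 ≤
        cutCount G (insert j (X1.erase i)) (insert i (X2.erase j))) :
    ∀ S : Finset V, n / 2 ≤ S.card →
      (max (cutCount G (X1 ∩ S) X1) (cutCount G (X2 ∩ S) X2) : ℝ) ≥
        (((n : ℝ) - 6) / ((n : ℝ) - 2)) * cutCount G (X1 ∩ S) (X2 ∩ S) := by
  intro S hS
  set A := X1 ∩ S with hA
  set B := X2 ∩ S with hB
  have hAX1 : A ⊆ X1 := inter_subset_left
  have hBX2 : B ⊆ X2 := inter_subset_left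
  -- pointwise swap inequality
  have key : ∀ i ∈ X1, ∀ j ∈ X2,
      (nbrCount G i X2 : ℤ) + nbrCount G j X1 ≤
        (nbrCount G i X1 : ℤ) + nbrCount G j X2 + 2 * (if G.Adj i j then 1 else 0) := by
    intro i hi j hj
    have hjX1 : j ∉ X1 := Finset.disjoint_right.mp hdisj hj
    have hiX2 : i ∉ X2 := Finset.disjoint_left.mp hdisj hi
    have h := hswap i hi j hj
    have hZ : (cutCount G X1 X2 : ℤ) ≤
        (cutCount G (insert j (X1.erase i)) (insert i (X2.erase j)) : ℤ) := by exact_mod_cast h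
    rw [cut_int, cut_int] at hZ
    have hiE : i ∉ X2.erase j := fun h' => hiX2 (Finset.mem_of_mem_erase h')
    have hjE : j ∉ X1.erase i := fun h' => hjX1 (Finset.mem_of_mem_erase h')
    -- expand inner sums
    have inner : ∀ u : V, (∑ v ∈ insert i (X2.erase j), (if G.Adj u v then (1:ℤ) else 0)) =
        (if G.Adj u i then (1:ℤ) else 0) + (∑ v ∈ X2, (if G.Adj u v then (1:ℤ) else 0))
          - (if G.Adj u j then (1:ℤ) else 0) := by
      intro u
      rw [Finset.sum_insert hiE, Finset.sum_erase_eq_sub hj]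
      ring
    rw [Finset.sum_insert hjE, Finset.sum_erase_eq_sub hi] at hZ
    simp only [inner] at hZ
    rw [Finset.sum_sub_distrib, Finset.sum_add_distrib] at hZ
    have e1 : (∑ u ∈ X1, (if G.Adj u i then (1:ℤ) else 0)) = nbrCount G i X1 := by
      rw [nbr_int]
      exact Finset.sum_congr rfl fun u _ => by simp [G.adj_comm]
    have e2 : (∑ u ∈ X1, (if G.Adj u j then (1:ℤ) else 0)) = nbrCount G j X1 := by
      rw [nbr_int]
      exact Finset.sum_congr rfl fun u _ => by simp [G.adj_comm]
    rw [e1, e2] at hZ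
    have e3 : (∑ v ∈ X2, (if G.Adj j v then (1:ℤ) else 0)) = nbrCount G j X2 := (nbr_int G j X2).symm
    have e4 : (∑ v ∈ X2, (if G.Adj i v then (1:ℤ) else 0)) = nbrCount G i X2 := (nbr_int G i X2).symm
    rw [e3, e4] at hZ
    have hii : ¬ G.Adj i i := G.loopless.irrefl i
    have hjj : ¬ G.Adj j j := G.loopless.irrefl j
    have hji : (if G.Adj j i then (1:ℤ) else 0) = (if G.Adj i j then (1:ℤ) else 0) := by
      simp [G.adj_comm]
    rw [hji] at hZ
    simp only [hii, hjj, if_false] at hZ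
    linarith
  -- sum the pointwise inequality over A × B
  have hsum : (B.card : ℤ) * cutCount G A X2 + (A.card : ℤ) * cutCount G B X1 ≤
      (B.card : ℤ) * cutCount G A X1 + (A.card : ℤ) * cutCount G B X2
        + 2 * cutCount G A B := by
    have step : ∑ i ∈ A, ∑ j ∈ B, ((nbrCount G i X2 : ℤ) + nbrCount G j X1) ≤
        ∑ i ∈ A, ∑ j ∈ B, ((nbrCount G i X1 : ℤ) + nbrCount G j X2
          + 2 * (if G.Adj i j then 1 else 0)) :=
      Finset.sum_le_sum fun i hi => Finset.sum_le_sum fun j hj =>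
        key i (hAX1 hi) j (hBX2 hj)
    have lhs_eq : ∑ i ∈ A, ∑ j ∈ B, ((nbrCount G i X2 : ℤ) + nbrCount G j X1) =
        (B.card : ℤ) * cutCount G A X2 + (A.card : ℤ) * cutCount G B X1 := by
      simp only [Finset.sum_add_distrib, Finset.sum_const, nsmul_eq_mul, ← Finset.mul_sum]
      unfold cutCount
      push_cast
      ring
    have rhs_eq : ∑ i ∈ A, ∑ j ∈ B, ((nbrCount G i X1 : ℤ) + nbrCount G j X2
          + 2 * (if G.Adj i j then 1 else 0)) =
        (B.card : ℤ) * cutCount G A X1 + (A.card : ℤ) * cutCount G B X2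
          + 2 * cutCount G A B := by
      rw [cut_int G A B]
      simp only [Finset.sum_add_distrib, Finset.sum_const, nsmul_eq_mul, ← Finset.mul_sum,
        Finset.mul_sum]
      unfold cutCount
      push_cast
      rw [Finset.mul_sum, Finset.mul_sum]
    rw [lhs_eq, rhs_eq] at step
    exact step
  -- monotonicity facts
  have h1 : (cutCount G A B : ℤ) ≤ cutCount G A X2 := by
    exact_mod_cast cut_mono G A hBX2
  have h2 : (cutCount G A B : ℤ) ≤ cutCount G B X1 := by
    have h' := cut_mono G B hAX1
    rw [cut_symm G A B]
    exact_mod_cast h'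
  -- cards
  have hScard : A.card + B.card = S.card := by
    have hu : A ∪ B = S := by
      rw [hA, hB, ← Finset.union_inter_distrib_right, hcover, Finset.univ_inter]
    have hd : Disjoint A B := hdisj.mono inter_subset_left inter_subset_left
    rw [← hu, Finset.card_union_of_disjoint hd]
  set M : ℕ := max (cutCount G A X1) (cutCount G B X2) with hM
  have hEM : ((S.card : ℤ) - 2) * cutCount G A B ≤ (S.card : ℤ) * M := by
    have c1 : (B.card : ℤ) * cutCount G A X1 ≤ (B.card : ℤ) * M :=
      mul_le_mul_of_nonneg_left
        (by exact_mod_cast le_max_left (cutCount G A X1) (cutCount G B X2))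
        (by positivity)
    have c2 : (A.card : ℤ) * cutCount G B X2 ≤ (A.card : ℤ) * M :=
      mul_le_mul_of_nonneg_left
        (by exact_mod_cast le_max_right (cutCount G A X1) (cutCount G B X2))
        (by positivity)
    have c3 : (B.card : ℤ) * cutCount G A B ≤ (B.card : ℤ) * cutCount G A X2 :=
      mul_le_mul_of_nonneg_left h1 (by positivity)
    have c4 : (A.card : ℤ) * cutCount G A B ≤ (A.card : ℤ) * cutCount G B X1 :=
      mul_le_mul_of_nonneg_left h2 (by positivity)
    have hcast : ((A.card : ℤ) + B.card) = (S.card : ℤ) := by exact_mod_cast hScard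
    have e1 : ((S.card : ℤ) - 2) * cutCount G A B =
        (A.card : ℤ) * cutCount G A B + (B.card : ℤ) * cutCount G A B
          - 2 * cutCount G A B := by rw [← hcast]; ring
    have e2 : (S.card : ℤ) * M = (A.card : ℤ) * M + (B.card : ℤ) * M := by
      rw [← hcast]; ring
    rw [e1, e2]
    linarith
  -- arithmetic
  have hs3 : 3 ≤ S.card := le_trans (by omega : 3 ≤ n / 2) hS
  have h2s : n ≤ 2 * S.card + 1 := by
    have := Nat.lt_succ_of_le hS
    omega
  have hE0 : (0:ℤ) ≤ cutCount G A B := Int.natCast_nonneg _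
  have hM0 : (0:ℤ) ≤ M := Int.natCast_nonneg _
  have hfinal : ((n:ℤ) - 6) * cutCount G A B ≤ ((n:ℤ) - 2) * M := by
    have hs : (3:ℤ) ≤ S.card := by exact_mod_cast hs3
    have hnn : (n:ℤ) ≤ 2 * S.card + 1 := by exact_mod_cast h2s
    have hn7' : (7:ℤ) ≤ n := by exact_mod_cast hn7
    have hmul : (S.card : ℤ) * (((n:ℤ) - 6) * cutCount G A B) ≤
        (S.card : ℤ) * (((n:ℤ) - 2) * M) := by
      nlinarith [mul_le_mul_of_nonneg_left hEM (show (0:ℤ) ≤ (n:ℤ) - 2 by linarith),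
        mul_nonneg (show (0:ℤ) ≤ 4 * (S.card : ℤ) - 2 * n + 4 by linarith) hE0]
    exact le_of_mul_le_mul_left hmul (by linarith)
  -- convert to ℝ
  have hn2 : (0:ℝ) < (n:ℝ) - 2 := by
    have : (7:ℝ) ≤ n := by exact_mod_cast hn7
    linarith
  rw [ge_iff_le, div_mul_eq_mul_div, div_le_iff₀ hn2]
  have hr : ((n:ℝ) - 6) * (cutCount G A B : ℝ) ≤ ((n:ℝ) - 2) * (M : ℝ) := by
    exact_mod_cast hfinal
  rw [hM] at hr
  push_cast at hr ⊢
  linarith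
end

section
/- Let G = (V,E) be a finite simple graph on n ≥ 7 vertices and (X_1, X_2) a balanced min-cut partition (minimizing E(X_1,X_2) among balanced partitions). Let φ = (1+√5)/2. Then there is no set S ⊆ V with ⌊n/2⌋ ≤ |S| ≤ ⌈n/2⌉ such that every vertex i ∈ S satisfies E(i, S) > φ·((n−2)/(n−6))·u_i(X), where u_i(X) = E(i, X_1) if i ∈ X_1 and E(i, X_2) if i ∈ X_2. In other words, the balanced min-cut partition is in the (φ·(n−2)/(n−6), 0)-core. -/
open Finset

section Aux
variable {V : Type*} [Fintype V] [DecidableEq V] (G : SimpleGraph V) [DecidableRel G.Adj]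

lemma nbr_sum (i : V) (T : Finset V) :
    nbrCount G i T = ∑ j ∈ T, if G.Adj i j then 1 else 0 := by
  rw [nbrCount, ← Finset.card_filter]
  congr 1
  ext j
  simp [SimpleGraph.mem_neighborFinset, and_comm]

lemma nbr_union (i : V) {T1 T2 : Finset V} (h : Disjoint T1 T2) :
    nbrCount G i (T1 ∪ T2) = nbrCount G i T1 + nbrCount G i T2 := by
  simp [nbr_sum, Finset.sum_union h]

lemma nbr_mono (i : V) {T1 T2 : Finset V} (h : T1 ⊆ T2) :
    nbrCount G i T1 ≤ nbrCount G i T2 :=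
  Finset.card_le_card (Finset.inter_subset_inter le_rfl h)

lemma cut_union_left {C1 C2 : Finset V} (D : Finset V) (h : Disjoint C1 C2) :
    cutCount G (C1 ∪ C2) D = cutCount G C1 D + cutCount G C2 D :=
  Finset.sum_union h

lemma cut_union_right (C : Finset V) {D1 D2 : Finset V} (h : Disjoint D1 D2) :
    cutCount G C (D1 ∪ D2) = cutCount G C D1 + cutCount G C D2 := by
  unfold cutCount
  rw [← Finset.sum_add_distrib]
  exact Finset.sum_congr rfl fun i _ => nbr_union G i h

lemma cut_comm (C D : Finset V) : cutCount G C D = cutCount G D C := by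
  unfold cutCount
  simp_rw [nbr_sum]
  rw [Finset.sum_comm]
  exact Finset.sum_congr rfl fun j _ => Finset.sum_congr rfl fun i _ =>
    if_congr (G.adj_comm _ _) rfl rfl

end Aux

def adjInd {V : Type*} [Fintype V] [DecidableEq V] (G : SimpleGraph V)
    [DecidableRel G.Adj] (x y : V) : ℝ := if G.Adj x y then 1 else 0

section Aux2
variable {V : Type*} [Fintype V] [DecidableEq V] (G : SimpleGraph V) [DecidableRel G.Adj]

lemma adjInd_nonneg (x y : V) : 0 ≤ adjInd G x y := by unfold adjInd; split <;> norm_num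
lemma adjInd_symm (x y : V) : adjInd G x y = adjInd G y x := by
  unfold adjInd; exact if_congr (G.adj_comm _ _) rfl rfl
lemma adjInd_self (x : V) : adjInd G x x = 0 := by simp [adjInd]

lemma nbrR (i : V) (T : Finset V) : (nbrCount G i T : ℝ) = ∑ j ∈ T, adjInd G i j := by
  rw [nbr_sum]
  push_cast
  exact Finset.sum_congr rfl fun j _ => by unfold adjInd; split <;> simp

lemma cutR (C D : Finset V) : (cutCount G C D : ℝ) = ∑ x ∈ C, ∑ y ∈ D, adjInd G x y := by
  unfold cutCount
  push_cast
  exact Finset.sum_congr rfl fun x _ => nbrR G x D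

lemma cutsum (C D : Finset V) : (cutCount G C D : ℝ) = ∑ i ∈ C, (nbrCount G i D : ℝ) := by
  unfold cutCount; push_cast; rfl

end Aux2

section Aux3
variable {V : Type*} [Fintype V] [DecidableEq V] (G : SimpleGraph V) [DecidableRel G.Adj]

lemma swap_ineq (X1 X2 : Finset V) (hdisj : Disjoint X1 X2) (hcover : X1 ∪ X2 = univ)
    (hbal : (X1.card : ℤ) - X2.card ≤ 1 ∧ (X2.card : ℤ) - X1.card ≤ 1)
    (hmin : ∀ Y1 Y2 : Finset V, Disjoint Y1 Y2 → Y1 ∪ Y2 = univ →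
      ((Y1.card : ℤ) - Y2.card ≤ 1 ∧ (Y2.card : ℤ) - Y1.card ≤ 1) →
      cutCount G X1 X2 ≤ cutCount G Y1 Y2)
    {i j : V} (hi : i ∈ X1) (hj : j ∈ X2) :
    (nbrCount G i X2 : ℝ) + nbrCount G j X1 ≤
      (nbrCount G i X1 : ℝ) + nbrCount G j X2 + 2 * adjInd G i j := by
  have hd := Finset.disjoint_left.mp hdisj
  have hjX1 : j ∉ X1 := fun h => hd h hj
  have hiX2 : i ∉ X2 := hd hi
  have hij : i ≠ j := fun h => hiX2 (h ▸ hj)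
  set Y1 := insert j (X1.erase i) with hY1def
  set Y2 := insert i (X2.erase j) with hY2def
  have hjE : j ∉ X1.erase i := fun h => hjX1 (Finset.mem_of_mem_erase h)
  have hiE : i ∉ X2.erase j := fun h => hiX2 (Finset.mem_of_mem_erase h)
  have hc1 : Y1.card = X1.card := by
    rw [hY1def, Finset.card_insert_of_notMem hjE, Finset.card_erase_of_mem hi]
    have : 0 < X1.card := Finset.card_pos.mpr ⟨i, hi⟩
    omega
  have hc2 : Y2.card = X2.card := by
    rw [hY2def, Finset.card_insert_of_notMem hiE, Finset.card_erase_of_mem hj]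
    have : 0 < X2.card := Finset.card_pos.mpr ⟨j, hj⟩
    omega
  have hdisj' : Disjoint Y1 Y2 := by
    rw [Finset.disjoint_left]
    intro x hx hx'
    rw [hY1def, Finset.mem_insert, Finset.mem_erase] at hx
    rw [hY2def, Finset.mem_insert, Finset.mem_erase] at hx'
    rcases hx with rfl | ⟨hxi, hx1⟩
    · rcases hx' with h | ⟨hxj, _⟩
      · exact hij h.symm
      · exact hxj rfl
    · rcases hx' with rfl | ⟨_, hx2⟩
      · exact hxi rfl
      · exact hd hx1 hx2
  have hcov' : Y1 ∪ Y2 = univ := by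
    ext x
    simp only [hY1def, hY2def, Finset.mem_union, Finset.mem_insert, Finset.mem_erase,
      Finset.mem_univ, iff_true]
    have hx : x ∈ X1 ∨ x ∈ X2 := by
      have : x ∈ X1 ∪ X2 := hcover ▸ Finset.mem_univ x
      exact Finset.mem_union.mp this
    by_cases h1 : x = i
    · subst h1; tauto
    · by_cases h2 : x = j
      · subst h2; tauto
      · tauto
  have hmin' := hmin Y1 Y2 hdisj' hcov' (by rw [hc1, hc2]; exact hbal)
  have key : (cutCount G Y1 Y2 : ℝ) = (cutCount G X1 X2 : ℝ) + nbrCount G i X1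
      + nbrCount G j X2 - nbrCount G j X1 - nbrCount G i X2 + 2 * adjInd G i j := by
    have einner : ∀ x : V, (nbrCount G x Y2 : ℝ)
        = adjInd G x i + (nbrCount G x X2 : ℝ) - adjInd G x j := by
      intro x
      rw [nbrR, nbrR, hY2def, Finset.sum_insert hiE, Finset.sum_erase_eq_sub hj]
      ring
    have h1 : (cutCount G Y1 Y2 : ℝ) = ∑ x ∈ Y1, (adjInd G x i + (nbrCount G x X2 : ℝ) - adjInd G x j) := by
      rw [cutsum]
      exact Finset.sum_congr rfl fun x _ => einner x
    rw [h1, hY1def, Finset.sum_insert hjE, Finset.sum_erase_eq_sub hi]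
    have h2 : ∑ x ∈ X1, (adjInd G x i + (nbrCount G x X2 : ℝ) - adjInd G x j)
        = (nbrCount G i X1 : ℝ) + (cutCount G X1 X2 : ℝ) - (nbrCount G j X1 : ℝ) := by
      rw [Finset.sum_sub_distrib, Finset.sum_add_distrib, cutsum]
      have e1 : ∑ x ∈ X1, adjInd G x i = (nbrCount G i X1 : ℝ) := by
        rw [nbrR]; exact Finset.sum_congr rfl fun x _ => adjInd_symm G x i
      have e2 : ∑ x ∈ X1, adjInd G x j = (nbrCount G j X1 : ℝ) := by
        rw [nbrR]; exact Finset.sum_congr rfl fun x _ => adjInd_symm G x j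
      rw [e1, e2]
    rw [h2, adjInd_self, adjInd_self, adjInd_symm G j i]
    ring
  have hle : (cutCount G X1 X2 : ℝ) ≤ (cutCount G Y1 Y2 : ℝ) := by exact_mod_cast hmin'
  rw [key] at hle
  linarith

end Aux3

lemma endgame (α w p q r s t e f a b N : ℝ) (hα : 1 < α)
    (h7 : 4*(α^2-1) < (N-1)*(α^2-α-1))
    (H1 : (α-1)*e + α*p < w) (H2 : (α-1)*f + α*q < w) (H3 : w + t ≤ p + q)
    (H4 : (α-2)*(b*e) + (α-2)*(a*f) + (α-1)*(b*p) + (α-1)*(a*q) + b*r + a*s ≤ 2*w)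
    (he : 0 ≤ e) (hf : 0 ≤ f) (hp : 0 ≤ p) (hq : 0 ≤ q) (hr : 0 ≤ r) (hs : 0 ≤ s)
    (ht : 0 ≤ t) (hw : 0 < w) (hb : 1 ≤ b) (hab : b ≤ a)
    (habN : (N-1)/2 ≤ a + b) (hN : 7 ≤ N) : False := by
  have hα0 : (0:ℝ) < α := by linarith
  rcases le_or_gt 2 α with hc | hc
  · have hp1 : α * p < w := by nlinarith [mul_nonneg (by linarith : (0:ℝ) ≤ α - 1) he]
    have hq1 : α * q < w := by nlinarith [mul_nonneg (by linarith : (0:ℝ) ≤ α - 1) hf]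
    have h4 : α*w ≤ α*(p+q) := mul_le_mul_of_nonneg_left (by linarith) (le_of_lt hα0)
    nlinarith [mul_nonneg (by linarith : (0:ℝ) ≤ α - 2) (le_of_lt hw)]
  · have hb0 : (0:ℝ) ≤ b := by linarith
    have ha0 : (0:ℝ) ≤ a := by linarith
    have hp1 : α * p ≤ w := by nlinarith [mul_nonneg (by linarith : (0:ℝ) ≤ α - 1) he]
    have hq1' : w - p ≤ q := by linarith
    have k1 : (2-α)*(b*((α-1)*e)) ≤ (2-α)*(b*(w - α*p)) := by
      apply mul_le_mul_of_nonneg_left _ (by linarith : (0:ℝ) ≤ 2-α)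
      apply mul_le_mul_of_nonneg_left _ hb0
      linarith
    have k2 : (2-α)*(a*((α-1)*f)) ≤ (2-α)*(a*(w - α*q)) := by
      apply mul_le_mul_of_nonneg_left _ (by linarith : (0:ℝ) ≤ 2-α)
      apply mul_le_mul_of_nonneg_left _ ha0
      linarith
    have k3 : (α-1)*((α-2)*(b*e) + (α-2)*(a*f) + (α-1)*(b*p) + (α-1)*(a*q) + b*r + a*s)
        ≤ (α-1)*(2*w) := mul_le_mul_of_nonneg_left H4 (by linarith)
    have hbr : 0 ≤ (α-1)*(b*r) := mul_nonneg (by linarith) (mul_nonneg hb0 hr)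
    have has : 0 ≤ (α-1)*(a*s) := mul_nonneg (by linarith) (mul_nonneg ha0 hs)
    have k4 : b*p + a*q ≤ 2*(α-1)*w + (2-α)*((a+b)*w) := by linarith [k1, k2, k3, hbr, has]
    have k5 : w*(a*(α-1)+b) ≤ α*(b*p + a*q) := by
      have m1 : α*a*(w - p) ≤ α*a*q :=
        mul_le_mul_of_nonneg_left hq1' (mul_nonneg (le_of_lt hα0) ha0)
      have m2 : (a-b)*(α*p) ≤ (a-b)*w := mul_le_mul_of_nonneg_left hp1 (by linarith)
      linarith [m1, m2]
    have k6 : w*(a*(α-1)+b) ≤ α*(2*(α-1)*w + (2-α)*((a+b)*w)) :=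
      le_trans k5 (mul_le_mul_of_nonneg_left k4 (le_of_lt hα0))
    have e6 : α*(2*(α-1)*w + (2-α)*((a+b)*w)) = w*(α*(2*(α-1) + (2-α)*(a+b))) := by ring
    rw [e6] at k6
    have k7 : a*(α-1)+b ≤ α*(2*(α-1) + (2-α)*(a+b)) := le_of_mul_le_mul_left k6 hw
    have hx : 0 < α^2 - α - 1 := by
      by_contra h
      push_neg at h
      have h2 : (N-1)*(α^2-α-1) ≤ 0 := mul_nonpos_of_nonneg_of_nonpos (by linarith) h
      have hα2 : 1 < α^2 := one_lt_pow₀ hα (by norm_num)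
      linarith
    have ha4 : (N-1)/4 ≤ a := by linarith
    have k8 : (N-1)/4*(α^2-α-1) ≤ a*(α^2-α-1) := mul_le_mul_of_nonneg_right ha4 (le_of_lt hx)
    have k9 : (α-1)^2 ≤ b*(α-1)^2 := le_mul_of_one_le_left (sq_nonneg _) hb
    linarith [k7, k8, k9, h7]

lemma alpha_facts (n : ℕ) (hn7 : 7 ≤ n) :
    1 < (1 + Real.sqrt 5) / 2 * (((n:ℝ) - 2) / ((n:ℝ) - 6)) ∧
    4 * (((1 + Real.sqrt 5) / 2 * (((n:ℝ) - 2) / ((n:ℝ) - 6)))^2 - 1) <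
      ((n:ℝ) - 1) * (((1 + Real.sqrt 5) / 2 * (((n:ℝ) - 2) / ((n:ℝ) - 6)))^2
        - (1 + Real.sqrt 5) / 2 * (((n:ℝ) - 2) / ((n:ℝ) - 6)) - 1) := by
  have hN : (7:ℝ) ≤ (n:ℝ) := by exact_mod_cast hn7
  set x := Real.sqrt 5 with hxdef
  set N := (n:ℝ) with hNdef
  have hx2 : x^2 = 5 := Real.sq_sqrt (by norm_num)
  have hx0 : 0 ≤ x := Real.sqrt_nonneg 5
  have hxge : 2 ≤ x := by nlinarith
  have hd : (0:ℝ) < N - 6 := by linarith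
  have hd2 : (0:ℝ) < (N - 6)^2 := by positivity
  constructor
  · have h1 : (1:ℝ) ≤ (N - 2) / (N - 6) := by
      rw [le_div_iff₀ hd]; linarith
    have h2 : (3:ℝ)/2 ≤ (1 + x)/2 := by linarith
    nlinarith [h1, h2]
  · have e1 : 4 * (((1 + x) / 2 * ((N - 2) / (N - 6)))^2 - 1)
        = (4 * (((1 + x)/2)^2 * (N - 2)^2 - (N - 6)^2)) / (N - 6)^2 := by
      field_simp
    have e2 : (N - 1) * (((1 + x) / 2 * ((N - 2) / (N - 6)))^2
          - (1 + x) / 2 * ((N - 2) / (N - 6)) - 1)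
        = ((N - 1) * (((1 + x)/2)^2 * (N - 2)^2 - (1 + x)/2 * (N - 2) * (N - 6)
            - (N - 6)^2)) / (N - 6)^2 := by
      field_simp
    rw [e1, e2, div_lt_div_iff_of_pos_right] -- maybe name differs
    · have idD : (N - 1) * (((1 + x)/2)^2 * (N - 2)^2 - (1 + x)/2 * (N - 2) * (N - 6)
            - (N - 6)^2) - 4 * (((1 + x)/2)^2 * (N - 2)^2 - (N - 6)^2)
          = 4 * ((3 + x)/2 * (N - 2) + (N - 6) * (2*N - 7)) := by
        linear_combination (N^3/4 - 9*N^2/4 + 6*N - 5) * hx2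
      nlinarith [mul_nonneg (by linarith : (0:ℝ) ≤ (3+x)/2) (by linarith : (0:ℝ) ≤ N - 2),
        mul_pos hd (by linarith : (0:ℝ) < 2*N - 7), idD]
    · exact hd2

set_option maxHeartbeats 1000000 in
lemma main_aux {V : Type*} [Fintype V] [DecidableEq V] (G : SimpleGraph V)
    [DecidableRel G.Adj] (n : ℕ) (hn : n = Fintype.card V) (hn7 : 7 ≤ n)
    (α : ℝ) (hα : 1 < α)
    (h7 : 4*(α^2-1) < ((n:ℝ)-1)*(α^2-α-1))
    (X1 X2 : Finset V) (hdisj : Disjoint X1 X2) (hcover : X1 ∪ X2 = univ)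
    (hbal : (X1.card : ℤ) - X2.card ≤ 1 ∧ (X2.card : ℤ) - X1.card ≤ 1)
    (hmin : ∀ Y1 Y2 : Finset V, Disjoint Y1 Y2 → Y1 ∪ Y2 = univ →
      ((Y1.card : ℤ) - Y2.card ≤ 1 ∧ (Y2.card : ℤ) - Y1.card ≤ 1) →
      cutCount G X1 X2 ≤ cutCount G Y1 Y2)
    (S : Finset V) (hS1 : n / 2 ≤ S.card) (hS2 : S.card ≤ (n + 1) / 2)
    (hblock : ∀ i ∈ S,
        (i ∈ X1 → (nbrCount G i S : ℝ) > α * nbrCount G i X1) ∧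
        (i ∈ X2 → (nbrCount G i S : ℝ) > α * nbrCount G i X2))
    (hab : (S ∩ X2).card ≤ (S ∩ X1).card) : False := by
  set A := S ∩ X1 with hAdef
  set B := S ∩ X2 with hBdef
  set A' := X1 \ S with hA'def
  set B' := X2 \ S with hB'def
  have hcov : ∀ x : V, x ∈ X1 ∨ x ∈ X2 := fun x => by
    have : x ∈ X1 ∪ X2 := hcover ▸ mem_univ x
    exact mem_union.mp this
  have hdx : ∀ x : V, x ∈ X1 → x ∉ X2 := fun x hx => disjoint_left.mp hdisj hx
  have hSAB : S = A ∪ B := by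
    ext x
    simp only [hAdef, hBdef, mem_union, mem_inter]
    rcases hcov x with h | h <;> tauto
  have hX1 : X1 = A ∪ A' := by
    ext x
    simp only [hAdef, hA'def, mem_union, mem_inter, mem_sdiff]
    by_cases h : x ∈ S <;> tauto
  have hX2 : X2 = B ∪ B' := by
    ext x
    simp only [hBdef, hB'def, mem_union, mem_inter, mem_sdiff]
    by_cases h : x ∈ S <;> tauto
  have hSc : Sᶜ = A' ∪ B' := by
    ext x
    simp only [hA'def, hB'def, mem_compl, mem_union, mem_sdiff]
    rcases hcov x with h | h <;> tauto
  have dAB : Disjoint A B := hdisj.mono inter_subset_right inter_subset_right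
  have dAA' : Disjoint A A' := by
    rw [Finset.disjoint_left]
    intro x hx hx'
    exact (mem_sdiff.mp hx').2 (mem_inter.mp hx).1
  have dBB' : Disjoint B B' := by
    rw [Finset.disjoint_left]
    intro x hx hx'
    exact (mem_sdiff.mp hx').2 (mem_inter.mp hx).1
  have dAB' : Disjoint A B' := hdisj.mono inter_subset_right sdiff_subset
  have dA'B : Disjoint A' B := hdisj.mono sdiff_subset inter_subset_right
  have dA'B' : Disjoint A' B' := hdisj.mono sdiff_subset sdiff_subset
  have hScard : S.Nonempty := card_pos.mp (by omega)
  -- nonemptiness of A and B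
  have hAne : A.Nonempty := by
    rw [Finset.nonempty_iff_ne_empty]
    intro h
    have hsub : S ⊆ X2 := by
      intro x hx
      rcases hcov x with h1 | h2
      · exact absurd (mem_inter.mpr ⟨hx, h1⟩) (by rw [← hAdef, h]; exact notMem_empty x)
      · exact h2
    obtain ⟨j, hj⟩ := hScard
    have h1 := (hblock j hj).2 (hsub hj)
    have h2 : (nbrCount G j S : ℝ) ≤ (nbrCount G j X2 : ℝ) := by
      exact_mod_cast nbr_mono G j hsub
    nlinarith [(by positivity : (0:ℝ) ≤ (nbrCount G j X2 : ℝ))]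
  have hBne : B.Nonempty := by
    rw [Finset.nonempty_iff_ne_empty]
    intro h
    have hsub : S ⊆ X1 := by
      intro x hx
      rcases hcov x with h1 | h2
      · exact h1
      · exact absurd (mem_inter.mpr ⟨hx, h2⟩) (by rw [← hBdef, h]; exact notMem_empty x)
    obtain ⟨j, hj⟩ := hScard
    have h1 := (hblock j hj).1 (hsub hj)
    have h2 : (nbrCount G j S : ℝ) ≤ (nbrCount G j X1 : ℝ) := by
      exact_mod_cast nbr_mono G j hsub
    nlinarith [(by positivity : (0:ℝ) ≤ (nbrCount G j X1 : ℝ))]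
  -- blocking in block form
  have hbA : ∀ i ∈ A, (α-1) * (nbrCount G i A : ℝ) + α * (nbrCount G i A' : ℝ)
      < (nbrCount G i B : ℝ) := by
    intro i hi
    obtain ⟨hiS, hiX1⟩ := mem_inter.mp hi
    have h1 := (hblock i hiS).1 hiX1
    have e1 : nbrCount G i S = nbrCount G i A + nbrCount G i B := by
      rw [hSAB]; exact nbr_union G i dAB
    have e2 : nbrCount G i X1 = nbrCount G i A + nbrCount G i A' := by
      rw [hX1]; exact nbr_union G i dAA'
    rw [e1, e2] at h1
    push_cast at h1
    linarith
  have hbB : ∀ j ∈ B, (α-1) * (nbrCount G j B : ℝ) + α * (nbrCount G j B' : ℝ)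
      < (nbrCount G j A : ℝ) := by
    intro j hj
    obtain ⟨hjS, hjX2⟩ := mem_inter.mp hj
    have h1 := (hblock j hjS).2 hjX2
    have e1 : nbrCount G j S = nbrCount G j A + nbrCount G j B := by
      rw [hSAB]; exact nbr_union G j dAB
    have e2 : nbrCount G j X2 = nbrCount G j B + nbrCount G j B' := by
      rw [hX2]; exact nbr_union G j dBB'
    rw [e1, e2] at h1
    push_cast at h1
    linarith
  -- H1
  have H1 : (α-1) * (cutCount G A A : ℝ) + α * (cutCount G A A' : ℝ)
      < (cutCount G A B : ℝ) := by
    have h := Finset.sum_lt_sum_of_nonempty hAne hbA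
    rw [Finset.sum_add_distrib, ← Finset.mul_sum, ← Finset.mul_sum] at h
    rw [cutsum G A A, cutsum G A A', cutsum G A B]
    exact h
  have H2 : (α-1) * (cutCount G B B : ℝ) + α * (cutCount G B B' : ℝ)
      < (cutCount G A B : ℝ) := by
    have h := Finset.sum_lt_sum_of_nonempty hBne hbB
    rw [Finset.sum_add_distrib, ← Finset.mul_sum, ← Finset.mul_sum] at h
    rw [cutsum G B B, cutsum G B B']
    have : (cutCount G A B : ℝ) = ∑ j ∈ B, (nbrCount G j A : ℝ) := by
      rw [cut_comm G A B, cutsum]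
    rw [this]
    exact h
  -- H3
  have hSn : S.card ≤ n := hn ▸ card_le_univ S
  have hbalS : ((S.card : ℤ) - (Sᶜ : Finset V).card ≤ 1 ∧ ((Sᶜ : Finset V).card : ℤ) - S.card ≤ 1) := by
    rw [Finset.card_compl, ← hn]
    constructor <;> omega
  have hminS := hmin S Sᶜ disjoint_compl_right (Finset.union_compl S) hbalS
  have hcutX : cutCount G X1 X2 = cutCount G A B + cutCount G A B'
      + cutCount G A' B + cutCount G A' B' := by
    rw [hX1, hX2, cut_union_left G _ dAA', cut_union_right G A dBB',
      cut_union_right G A' dBB']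
    ring
  have hcutS : cutCount G S Sᶜ = cutCount G A A' + cutCount G A B'
      + cutCount G A' B + cutCount G B B' := by
    rw [hSc, hSAB, cut_union_left G _ dAB, cut_union_right G A dA'B',
      cut_union_right G B dA'B', cut_comm G B A']
    ring
  have H3 : (cutCount G A B : ℝ) + (cutCount G A' B' : ℝ)
      ≤ (cutCount G A A' : ℝ) + (cutCount G B B' : ℝ) := by
    rw [hcutX, hcutS] at hminS
    have : ((cutCount G A B + cutCount G A B' + cutCount G A' B + cutCount G A' B' : ℕ) : ℝ)
        ≤ ((cutCount G A A' + cutCount G A B' + cutCount G A' B + cutCount G B B' : ℕ) : ℝ) := by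
      exact_mod_cast hminS
    push_cast at this
    linarith
  -- H4
  have hswap : ∀ i ∈ A, ∀ j ∈ B,
      (α-2) * (nbrCount G i A : ℝ) + (α-2) * (nbrCount G j B : ℝ)
      + (α-1) * (nbrCount G i A' : ℝ) + (α-1) * (nbrCount G j B' : ℝ)
      + (nbrCount G i B' : ℝ) + (nbrCount G j A' : ℝ) ≤ 2 * adjInd G i j := by
    intro i hi j hj
    have hiX1 := (mem_inter.mp hi).2
    have hjX2 := (mem_inter.mp hj).2
    have hsw := swap_ineq G X1 X2 hdisj hcover hbal hmin hiX1 hjX2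
    have e1 : nbrCount G i X2 = nbrCount G i B + nbrCount G i B' := by
      rw [hX2]; exact nbr_union G i dBB'
    have e2 : nbrCount G j X1 = nbrCount G j A + nbrCount G j A' := by
      rw [hX1]; exact nbr_union G j dAA'
    have e3 : nbrCount G i X1 = nbrCount G i A + nbrCount G i A' := by
      rw [hX1]; exact nbr_union G i dAA'
    have e4 : nbrCount G j X2 = nbrCount G j B + nbrCount G j B' := by
      rw [hX2]; exact nbr_union G j dBB'
    rw [e1, e2, e3, e4] at hsw
    push_cast at hsw
    have hbi := hbA i hi
    have hbj := hbB j hj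
    linarith
  have H4sum : ∑ i ∈ A, ∑ j ∈ B,
      ((α-2) * (nbrCount G i A : ℝ) + (α-2) * (nbrCount G j B : ℝ)
      + (α-1) * (nbrCount G i A' : ℝ) + (α-1) * (nbrCount G j B' : ℝ)
      + (nbrCount G i B' : ℝ) + (nbrCount G j A' : ℝ))
      ≤ ∑ i ∈ A, ∑ j ∈ B, 2 * adjInd G i j :=
    Finset.sum_le_sum fun i hi => Finset.sum_le_sum fun j hj => hswap i hi j hj
  have hR : ∑ i ∈ A, ∑ j ∈ B, 2 * adjInd G i j = 2 * (cutCount G A B : ℝ) := by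
    rw [cutR]
    rw [Finset.mul_sum]
    exact Finset.sum_congr rfl fun i _ => by rw [Finset.mul_sum]
  have hL : ∑ i ∈ A, ∑ j ∈ B,
      ((α-2) * (nbrCount G i A : ℝ) + (α-2) * (nbrCount G j B : ℝ)
      + (α-1) * (nbrCount G i A' : ℝ) + (α-1) * (nbrCount G j B' : ℝ)
      + (nbrCount G i B' : ℝ) + (nbrCount G j A' : ℝ))
      = (α-2) * ((B.card : ℝ) * (cutCount G A A : ℝ))
      + (α-2) * ((A.card : ℝ) * (cutCount G B B : ℝ))
      + (α-1) * ((B.card : ℝ) * (cutCount G A A' : ℝ))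
      + (α-1) * ((A.card : ℝ) * (cutCount G B B' : ℝ))
      + (B.card : ℝ) * (cutCount G A B' : ℝ)
      + (A.card : ℝ) * (cutCount G A' B : ℝ) := by
    simp_rw [Finset.sum_add_distrib, Finset.sum_const, nsmul_eq_mul]
    rw [cutsum G A A, cutsum G A A', cutsum G A B', cutsum G B B, cutsum G B B']
    have : (cutCount G A' B : ℝ) = ∑ j ∈ B, (nbrCount G j A' : ℝ) := by
      rw [cut_comm G A' B, cutsum]
    rw [this]
    simp_rw [← Finset.mul_sum]
    ring
  rw [hL, hR] at H4sum
  -- side facts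
  have hwpos : (0:ℝ) < (cutCount G A B : ℝ) := by
    rw [cutsum]
    apply Finset.sum_pos _ hAne
    intro i hi
    have h1 := hbA i hi
    have h2 : (0:ℝ) ≤ (α-1) * (nbrCount G i A : ℝ) + α * (nbrCount G i A' : ℝ) :=
      add_nonneg (mul_nonneg (by linarith) (by positivity))
        (mul_nonneg (by linarith) (by positivity))
    linarith
  have hb1 : (1:ℝ) ≤ (B.card : ℝ) := by
    have : 1 ≤ B.card := Finset.card_pos.mpr hBne
    exact_mod_cast this
  have hba : (B.card : ℝ) ≤ (A.card : ℝ) := by exact_mod_cast hab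
  have hcards : A.card + B.card = S.card := by
    rw [hSAB, Finset.card_union_of_disjoint dAB]
  have habN : ((n:ℝ)-1)/2 ≤ (A.card : ℝ) + (B.card : ℝ) := by
    have h1 : n - 1 ≤ 2 * (A.card + B.card) := by omega
    have h2 : ((n:ℝ)) ≤ 1 + 2 * ((A.card : ℝ) + (B.card : ℝ)) := by
      have : n ≤ 1 + 2 * (A.card + B.card) := by omega
      exact_mod_cast this
    linarith
  have hN : (7:ℝ) ≤ (n:ℝ) := by exact_mod_cast hn7
  exact endgame α (cutCount G A B : ℝ) (cutCount G A A' : ℝ) (cutCount G B B' : ℝ)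
    (cutCount G A B' : ℝ) (cutCount G A' B : ℝ) (cutCount G A' B' : ℝ)
    (cutCount G A A : ℝ) (cutCount G B B : ℝ) (A.card : ℝ) (B.card : ℝ) (n : ℝ)
    hα h7 H1 H2 H3 H4sum (Nat.cast_nonneg _) (Nat.cast_nonneg _) (Nat.cast_nonneg _)
    (Nat.cast_nonneg _) (Nat.cast_nonneg _) (Nat.cast_nonneg _) (Nat.cast_nonneg _)
    hwpos hb1 hba habN hN

theorem stmt_9 {V : Type*} [Fintype V] [DecidableEq V] (G : SimpleGraph V)
    [DecidableRel G.Adj] (n : ℕ) (hn : n = Fintype.card V) (hn7 : 7 ≤ n)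
    (φ : ℝ) (hφ : φ = (1 + Real.sqrt 5) / 2)
    (X1 X2 : Finset V) (hdisj : Disjoint X1 X2) (hcover : X1 ∪ X2 = univ)
    (hbal : (X1.card : ℤ) - X2.card ≤ 1 ∧ (X2.card : ℤ) - X1.card ≤ 1)
    (hmin : ∀ Y1 Y2 : Finset V, Disjoint Y1 Y2 → Y1 ∪ Y2 = univ →
      ((Y1.card : ℤ) - Y2.card ≤ 1 ∧ (Y2.card : ℤ) - Y1.card ≤ 1) →
      cutCount G X1 X2 ≤ cutCount G Y1 Y2) :
    ¬ ∃ S : Finset V, n / 2 ≤ S.card ∧ S.card ≤ (n + 1) / 2 ∧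
      ∀ i ∈ S,
        (i ∈ X1 → (nbrCount G i S : ℝ) >
          φ * (((n : ℝ) - 2) / ((n : ℝ) - 6)) * nbrCount G i X1) ∧
        (i ∈ X2 → (nbrCount G i S : ℝ) >
          φ * (((n : ℝ) - 2) / ((n : ℝ) - 6)) * nbrCount G i X2) := by
  rintro ⟨S, hS1, hS2, hSblock⟩
  obtain ⟨hα1, h7⟩ := alpha_facts n hn7
  subst hφ
  set α : ℝ := (1 + Real.sqrt 5) / 2 * (((n : ℝ) - 2) / ((n : ℝ) - 6)) with hαdef
  have hblock' : ∀ i ∈ S,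
      (i ∈ X1 → (nbrCount G i S : ℝ) > α * nbrCount G i X1) ∧
      (i ∈ X2 → (nbrCount G i S : ℝ) > α * nbrCount G i X2) := by
    intro i hi
    have h := hSblock i hi
    constructor
    · intro hx
      have := h.1 hx
      rw [hαdef]
      calc ((1 + Real.sqrt 5) / 2 * (((n:ℝ) - 2) / ((n:ℝ) - 6))) * (nbrCount G i X1 : ℝ)
          = (1 + Real.sqrt 5) / 2 * (((n:ℝ) - 2) / ((n:ℝ) - 6)) * (nbrCount G i X1 : ℝ) := by ring
        _ < (nbrCount G i S : ℝ) := this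
    · intro hx
      have := h.2 hx
      rw [hαdef]
      calc ((1 + Real.sqrt 5) / 2 * (((n:ℝ) - 2) / ((n:ℝ) - 6))) * (nbrCount G i X2 : ℝ)
          = (1 + Real.sqrt 5) / 2 * (((n:ℝ) - 2) / ((n:ℝ) - 6)) * (nbrCount G i X2 : ℝ) := by ring
        _ < (nbrCount G i S : ℝ) := this
  have h7' : 4*(α^2-1) < ((n:ℝ)-1)*(α^2-α-1) := by
    rw [hαdef]; exact h7
  have hα1' : 1 < α := by rw [hαdef]; exact hα1
  rcases le_total ((S ∩ X2).card) ((S ∩ X1).card) with h | h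
  · exact main_aux G n hn hn7 α hα1' h7' X1 X2 hdisj hcover hbal hmin S hS1 hS2 hblock' h
  · refine main_aux G n hn hn7 α hα1' h7' X2 X1 hdisj.symm (by rw [union_comm]; exact hcover)
      ⟨hbal.2, hbal.1⟩ (fun Y1 Y2 d c b => by
        rw [cut_comm G X2 X1]; exact hmin Y1 Y2 d c b) S hS1 hS2
      (fun i hi => ⟨(hblock' i hi).2, (hblock' i hi).1⟩) h
end

section
/- Fix integers n ≥ k ≥ 1. If each of n elements is assigned independently and uniformly at random to one of k parts, then the probability that the resulting partition is balanced (every part has size ⌊n/k⌋ or ⌈n/k⌉, with sizes summing to n) is at least (2ne/k)^(−2k). -/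
open Finset Nat

namespace Stmt14Aux

/-- cut points for the balanced function -/
def cpt (n k m : ℕ) : ℕ := (m * n + (k - 1)) / k

lemma cpt_le_iff {n k : ℕ} (hk : 0 < k) (j x : ℕ) : cpt n k j ≤ x ↔ j * n ≤ k * x := by
  unfold cpt
  rw [Nat.div_le_iff_le_mul_add_pred hk]
  constructor
  · intro h; omega
  · intro h; omega

lemma cpt_zero {n k : ℕ} (hk : 0 < k) : cpt n k 0 = 0 := by
  unfold cpt; simp [Nat.div_eq_of_lt (by omega : k - 1 < k)]

lemma cpt_last {n k : ℕ} (hk : 0 < k) : cpt n k k = n := by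
  unfold cpt
  rw [Nat.mul_add_div hk, Nat.div_eq_of_lt (by omega : k - 1 < k)]; ring

lemma cpt_mono {n k : ℕ} {a b : ℕ} (h : a ≤ b) : cpt n k a ≤ cpt n k b := by
  unfold cpt
  exact Nat.div_le_div_right (by exact Nat.add_le_add_right (Nat.mul_le_mul_right n h) _)

lemma cpt_lower_mul {n k : ℕ} (hk : 0 < k) (m : ℕ) : m * n ≤ k * cpt n k m := by
  have h := Nat.div_add_mod (m * n + (k - 1)) k
  have h2 := Nat.mod_lt (m * n + (k - 1)) hk
  unfold cpt
  omega

lemma cpt_step_lower {n k : ℕ} (hk : 0 < k) (m : ℕ) :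
    cpt n k m + n / k ≤ cpt n k (m + 1) := by
  rw [show cpt n k (m+1) = ((m*n + n) + (k-1))/k by unfold cpt; ring_nf]
  rw [Nat.le_div_iff_mul_le hk, add_mul]
  have h1 : cpt n k m * k ≤ m * n + (k - 1) := Nat.div_mul_le_self _ _
  have h2 : n / k * k ≤ n := Nat.div_mul_le_self _ _
  omega

lemma ceil_le {n k : ℕ} (hk : 0 < k) : (n + k - 1) / k ≤ n / k + 1 := by
  have h := Nat.div_add_mod n k
  have h2 := Nat.mod_lt n hk
  rw [Nat.div_le_iff_le_mul_add_pred hk]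
  have h3 : k * (n / k + 1) = k * (n / k) + k := by ring
  omega

lemma floor_le_ceil {n k : ℕ} (hk : 0 < k) : n / k ≤ (n + k - 1) / k :=
  Nat.div_le_div_right (by omega)

lemma cpt_step_upper {n k : ℕ} (hk : 0 < k) (m : ℕ) :
    cpt n k (m + 1) ≤ cpt n k m + (n + k - 1) / k := by
  rw [show cpt n k (m+1) = ((m*n + n) + (k-1))/k by unfold cpt; ring_nf]
  rw [Nat.div_le_iff_le_mul_add_pred hk]
  have h1 := cpt_lower_mul (n := n) hk m
  have h2 : n ≤ k * ((n + k - 1) / k) := by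
    have h := Nat.div_add_mod (n + k - 1) k
    have h2 := Nat.mod_lt (n + k - 1) hk
    omega
  rw [Nat.mul_add]
  omega


variable {n k : ℕ}

/-- the balanced base function -/
def bfun (n k : ℕ) (hn : 0 < n) (hk : 0 < k) (i : Fin n) : Fin k :=
  ⟨k * i / n, by
    rw [Nat.div_lt_iff_lt_mul hn]
    exact mul_lt_mul_of_pos_left i.isLt hk⟩

lemma bfun_eq_iff (hn : 0 < n) (hk : 0 < k) (i : Fin n) (j : Fin k) :
    bfun n k hn hk i = j ↔ cpt n k j.val ≤ i.val ∧ i.val < cpt n k (j.val + 1) := by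
  rw [Fin.ext_iff]
  show k * i.val / n = j.val ↔ _
  rw [cpt_le_iff hk, ]
  constructor
  · intro h
    constructor
    · rw [← h]
      exact Nat.div_mul_le_self _ _
    · by_contra hcon
      push_neg at hcon
      rw [cpt_le_iff hk] at hcon
      have : j.val + 1 ≤ k * i.val / n := by
        rw [Nat.le_div_iff_mul_le hn]; exact hcon
      omega
  · rintro ⟨h1, h2⟩
    have h2' : k * i.val < (j.val + 1) * n := by
      by_contra hcon
      push_neg at hcon
      rw [← cpt_le_iff hk] at hcon
      omega
    have hle : j.val ≤ k * i.val / n := by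
      rw [Nat.le_div_iff_mul_le hn]; exact h1
    have hlt : k * i.val / n < j.val + 1 := by
      rw [Nat.div_lt_iff_lt_mul hn]; exact h2'
    omega

lemma card_fiber (hn : 0 < n) (hk : 0 < k) (j : Fin k) :
    (univ.filter (fun i : Fin n => bfun n k hn hk i = j)).card
      = cpt n k (j.val + 1) - cpt n k j.val := by
  rw [← Nat.card_Ico]
  apply Finset.card_bij (fun (i : Fin n) _ => i.val)
  · intro a ha
    simp only [mem_filter, mem_univ, true_and] at ha
    rw [bfun_eq_iff hn hk] at ha
    simpa [Finset.mem_Ico] using ha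
  · intro a _ b _ h
    exact Fin.ext h
  · intro x hx
    rw [Finset.mem_Ico] at hx
    have hxn : x < n := by
      have h1 : cpt n k (j.val + 1) ≤ cpt n k k := cpt_mono (by omega : j.val + 1 ≤ k)
      rw [cpt_last hk] at h1
      omega
    refine ⟨⟨x, hxn⟩, ?_, rfl⟩
    simp only [mem_filter, mem_univ, true_and]
    rw [bfun_eq_iff hn hk]
    exact hx

lemma fiber_card_spec (hn : 0 < n) (hk : 0 < k) (j : Fin k) :
    ((univ.filter (fun i : Fin n => bfun n k hn hk i = j)).card = n / k ∨
     (univ.filter (fun i : Fin n => bfun n k hn hk i = j)).card = (n + k - 1) / k) ∧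
    (univ.filter (fun i : Fin n => bfun n k hn hk i = j)).card ≤ n / k + 1 := by
  rw [card_fiber hn hk]
  have h1 := cpt_step_lower (n := n) hk j.val
  have h2 := cpt_step_upper (n := n) hk j.val
  have h3 := ceil_le (n := n) hk
  have h4 := floor_le_ceil (n := n) hk
  set a := cpt n k (j.val + 1) with ha
  set b := cpt n k j.val with hb
  set fl := n / k with hfl
  set ce := (n + k - 1) / k with hce
  clear_value a b fl ce
  omega


open Equiv in
lemma stab_card_le (hn : 0 < n) (hk : 0 < k) :
    (univ.filter (fun pi : Equiv.Perm (Fin n) =>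
        (bfun n k hn hk) ∘ pi = bfun n k hn hk)).card ≤ (n / k + 1)! ^ k := by
  set b := bfun n k hn hk with hbdef
  have h1 : (univ.filter (fun pi : Equiv.Perm (Fin n) => b ∘ pi = b)).card
      = Fintype.card {pi : Equiv.Perm (Fin n) // b ∘ pi = b} :=
    (Fintype.card_subtype _).symm
  rw [h1]
  have key : Fintype.card {pi : Equiv.Perm (Fin n) // b ∘ pi = b}
      ≤ Fintype.card (∀ j : Fin k, Equiv.Perm {i : Fin n // b i = j}) := by
    apply Fintype.card_le_of_injective
      (fun pi j => Equiv.Perm.subtypePerm pi.1 (fun x => by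
        have hx : b (pi.1 x) = b x := congrFun pi.2 x
        constructor
        · intro h; rw [← hx, h]
        · intro h; rw [hx, h]))
    intro p1 p2 h
    ext x
    have h2 := congrFun h (b x)
    have h3 := DFunLike.congr_fun h2 ⟨x, rfl⟩
    exact congrArg Fin.val (by simpa [Equiv.Perm.subtypePerm_apply, Subtype.ext_iff] using h3)
  refine key.trans ?_
  rw [Fintype.card_pi]
  have hbound : ∀ j : Fin k, Fintype.card (Equiv.Perm {i : Fin n // b i = j}) ≤ (n / k + 1)! := by
    intro j
    rw [Fintype.card_perm]
    apply Nat.factorial_le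
    rw [Fintype.card_subtype]
    exact (fiber_card_spec hn hk j).2
  calc (∏ j : Fin k, Fintype.card (Equiv.Perm {i : Fin n // b i = j}))
      ≤ ∏ _j : Fin k, (n / k + 1)! := Finset.prod_le_prod (fun _ _ => Nat.zero_le _) (fun j _ => hbound j)
    _ = (n / k + 1)! ^ k := by simp [Finset.prod_const, Finset.card_univ]

lemma main_count (hn : 0 < n) (hk : 0 < k) :
    n ! ≤ (univ.filter (fun f : Fin n → Fin k =>
        ∀ j : Fin k,
          (univ.filter (fun i => f i = j)).card = n / k ∨
          (univ.filter (fun i => f i = j)).card = (n + k - 1) / k)).card * (n / k + 1)! ^ k := by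
  classical
  set b := bfun n k hn hk with hbdef
  set B := univ.filter (fun f : Fin n → Fin k =>
        ∀ j : Fin k,
          (univ.filter (fun i => f i = j)).card = n / k ∨
          (univ.filter (fun i => f i = j)).card = (n + k - 1) / k) with hBdef
  have hcard : (univ : Finset (Equiv.Perm (Fin n))).card = n ! := by
    simp [Finset.card_univ, Fintype.card_perm, Fintype.card_fin]
  have himg : ∀ sigma : Equiv.Perm (Fin n), sigma ∈ (univ : Finset (Equiv.Perm (Fin n))) →
      (b ∘ sigma) ∈ B := by
    intro sigma _
    rw [hBdef, mem_filter]
    refine ⟨mem_univ _, fun j => ?_⟩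
    have hcongr : (univ.filter (fun i : Fin n => (b ∘ sigma) i = j)).card
        = (univ.filter (fun i : Fin n => b i = j)).card := by
      apply Finset.card_bij (fun (i : Fin n) _ => sigma i)
      · intro a ha
        simp only [mem_filter, mem_univ, true_and, Function.comp_apply] at ha ⊢
        exact ha
      · intro a _ a' _ h
        exact sigma.injective h
      · intro x hx
        simp only [mem_filter, mem_univ, true_and] at hx
        refine ⟨sigma.symm x, ?_, by simp⟩
        simp only [mem_filter, mem_univ, true_and, Function.comp_apply, Equiv.apply_symm_apply]
        exact hx
    rw [hcongr]
    exact (fiber_card_spec hn hk j).1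
  rw [← hcard, Finset.card_eq_sum_card_fiberwise himg]
  have hfiber : ∀ f ∈ B,
      ((univ : Finset (Equiv.Perm (Fin n))).filter (fun sigma : Equiv.Perm (Fin n) => b ∘ ⇑sigma = f)).card
        ≤ (n / k + 1)! ^ k := by
    intro f _
    rcases Finset.eq_empty_or_nonempty
      ((univ : Finset (Equiv.Perm (Fin n))).filter (fun sigma : Equiv.Perm (Fin n) => b ∘ ⇑sigma = f)) with he | ⟨sigma0, hs0⟩
    · rw [he]; simp
    · simp only [mem_filter, mem_univ, true_and] at hs0
      have step : ((univ : Finset (Equiv.Perm (Fin n))).filter (fun sigma : Equiv.Perm (Fin n) => b ∘ ⇑sigma = f)).card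
          ≤ (univ.filter (fun pi : Equiv.Perm (Fin n) => b ∘ ⇑pi = b)).card := by
        apply Finset.card_le_card_of_injOn (fun sigma : Equiv.Perm (Fin n) => sigma0 * sigma⁻¹)
        · intro sigma hsigma
          simp only [Finset.mem_coe, mem_filter, mem_univ, true_and] at hsigma ⊢
          funext x
          have h1 : b (sigma0 (sigma⁻¹ x)) = f (sigma⁻¹ x) := congrFun hs0 (sigma⁻¹ x)
          have h2 : b (sigma (sigma⁻¹ x)) = f (sigma⁻¹ x) := congrFun hsigma (sigma⁻¹ x)
          simp only [Function.comp_apply, Equiv.Perm.mul_apply]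
          rw [h1, ← h2]
          simp
        · intro s1 _ s2 _ h
          have h' := mul_left_cancel h
          exact inv_injective h'
      exact step.trans (stab_card_le hn hk)
  refine le_trans (Finset.sum_le_card_nsmul B _ ((n / k + 1)! ^ k) ?_) (by simp [smul_eq_mul])
  intro f hf
  exact hfiber f hf


/-! ### Analytic estimates -/

lemma keyexp (m : ℕ) (hm : 1 ≤ m) :
    Real.exp 1 * (m:ℝ)^(m+1) ≤ ((m:ℝ)+1)^(m+1) := by
  have hm0 : (0:ℝ) < m := by exact_mod_cast hm
  have hm1 : (0:ℝ) < (m:ℝ) + 1 := by linarith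
  have hlog : 1/((m:ℝ)+1) ≤ Real.log (((m:ℝ)+1)/m) := by
    have h := Real.log_le_sub_one_of_pos (show (0:ℝ) < (m:ℝ)/((m:ℝ)+1) by positivity)
    rw [Real.log_div (ne_of_gt hm0) (ne_of_gt hm1)] at h
    rw [Real.log_div (ne_of_gt hm1) (ne_of_gt hm0)]
    have : (m:ℝ)/((m:ℝ)+1) - 1 = -(1/((m:ℝ)+1)) := by field_simp; ring
    rw [this] at h
    linarith
  have hexp : Real.exp (1/((m:ℝ)+1)) ≤ ((m:ℝ)+1)/m := by
    rw [← Real.exp_log (show (0:ℝ) < ((m:ℝ)+1)/m by positivity)]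
    exact Real.exp_le_exp.mpr hlog
  have hpow : Real.exp 1 ≤ (((m:ℝ)+1)/m)^(m+1) := by
    have h1 : Real.exp 1 = Real.exp (1/((m:ℝ)+1)) ^ (m+1) := by
      rw [← Real.exp_nat_mul]
      congr 1
      push_cast
      field_simp
    rw [h1]
    exact pow_le_pow_left₀ (Real.exp_pos _).le hexp (m+1)
  calc Real.exp 1 * (m:ℝ)^(m+1) ≤ (((m:ℝ)+1)/m)^(m+1) * (m:ℝ)^(m+1) :=
        mul_le_mul_of_nonneg_right hpow (by positivity)
    _ = ((m:ℝ)+1)^(m+1) := by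
        rw [← mul_pow]
        congr 1
        field_simp

lemma stirU : ∀ m : ℕ, 1 ≤ m → (m ! : ℝ) * Real.exp 1 ^ m ≤ Real.exp 1 * (m:ℝ)^(m+1) := by
  intro m
  induction m with
  | zero => intro h; omega
  | succ p ih =>
    intro _
    rcases Nat.eq_zero_or_pos p with hp | hp
    · subst hp
      simp [Nat.factorial]
    · have ihp := ih hp
      have hkey := keyexp p hp
      have hp0 : (0:ℝ) ≤ (p:ℝ) + 1 := by positivity
      have hE : (0:ℝ) < Real.exp 1 := Real.exp_pos 1
      calc ((p+1)! : ℝ) * Real.exp 1 ^ (p+1)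
          = ((p:ℝ)+1) * Real.exp 1 * ((p ! : ℝ) * Real.exp 1 ^ p) := by
            push_cast [Nat.factorial_succ]
            ring
        _ ≤ ((p:ℝ)+1) * Real.exp 1 * (Real.exp 1 * (p:ℝ)^(p+1)) := by
            apply mul_le_mul_of_nonneg_left ihp (by positivity)
        _ = ((p:ℝ)+1) * Real.exp 1 * (Real.exp 1 * (p:ℝ)^(p+1)) := rfl
        _ ≤ ((p:ℝ)+1) * Real.exp 1 * (((p:ℝ)+1)^(p+1)) := by
            apply mul_le_mul_of_nonneg_left hkey (by positivity)
        _ = Real.exp 1 * (((p:ℕ)+1 : ℝ))^(p+1+1) := by push_cast; ring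
        _ = Real.exp 1 * (((p+1 : ℕ) : ℝ))^(p+1+1) := by push_cast; ring

lemma lowfact (n : ℕ) : (n:ℝ)^n ≤ (n ! : ℝ) * Real.exp 1 ^ n := by
  have h := Real.pow_div_factorial_le_exp (x := (n:ℝ)) (Nat.cast_nonneg n) n
  rw [div_le_iff₀ (by exact_mod_cast Nat.factorial_pos n)] at h
  rw [Real.exp_one_pow]
  calc (n:ℝ)^n ≤ Real.exp n * (n ! : ℝ) := h
    _ = (n ! : ℝ) * Real.exp n := mul_comm _ _

lemma growth (n k : ℕ) (hn : 0 < n) : ((n:ℝ) + k)^n ≤ (n:ℝ)^n * Real.exp 1 ^ k := by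
  have hn0 : (0:ℝ) < n := by exact_mod_cast hn
  have h1 : (n:ℝ) + k ≤ n * Real.exp ((k:ℝ)/n) := by
    have h := Real.add_one_le_exp ((k:ℝ)/n)
    have h2 : (n:ℝ) + k = n * ((k:ℝ)/n + 1) := by field_simp; ring
    rw [h2]
    exact mul_le_mul_of_nonneg_left h hn0.le
  calc ((n:ℝ) + k)^n ≤ ((n:ℝ) * Real.exp ((k:ℝ)/n))^n := pow_le_pow_left₀ (by positivity) h1 n
    _ = (n:ℝ)^n * Real.exp ((k:ℝ)/n)^n := mul_pow _ _ _
    _ = (n:ℝ)^n * Real.exp 1 ^ k := by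
        rw [Real.exp_one_pow, ← Real.exp_nat_mul]
        congr 2
        field_simp


lemma master (n k : ℕ) (hk : 1 ≤ k) (hkn : k ≤ n) :
    (k:ℝ)^n * ((n/k + 1)! : ℝ)^k ≤ (n ! : ℝ) * (2*(n:ℝ)*Real.exp 1/(k:ℝ))^(2*k) := by
  have hn : 0 < n := lt_of_lt_of_le hk hkn
  have hkq : k * (n/k) ≤ n := Nat.mul_div_le n k
  have hmod := Nat.div_add_mod n k
  have hmodlt := Nat.mod_lt n (show 0 < k by omega)
  have e1 : (n/k + 1) * k = k * (n/k) + k := by ring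
  have hQk1 : n ≤ (n/k + 1) * k := by omega
  have hQk2 : (n/k + 1) * k ≤ n + k := by omega
  have hQ2n : (n/k + 1) * k ≤ 2 * n := by omega
  have e2 : ((n/k + 1) + 1) * k = (n/k + 1) * k + k := by ring
  have hsplit : ((n/k + 1) + 1) * k = ((n/k + 1) * k - n) + n + k := by
    rw [e2, Nat.sub_add_cancel hQk1]
  have hsub : (n/k + 1) * k - n ≤ k :=
    Nat.sub_le_iff_le_add.mpr (le_trans hQk2 (le_of_eq (Nat.add_comm n k)))
  have hQge1 : 1 ≤ n/k + 1 := Nat.le_add_left 1 (n/k)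
  set q := n / k with hq
  set Q := q + 1 with hQdef
  set E := Real.exp 1 with hE
  have hE1 : (1:ℝ) ≤ E := by
    have := Real.add_one_le_exp (1:ℝ)
    rw [hE]; linarith
  have hE0 : (0:ℝ) < E := lt_of_lt_of_le one_pos hE1
  have hQ1 : (1:ℝ) ≤ (Q:ℝ) := by exact_mod_cast hQge1
  have hQ0 : (0:ℝ) ≤ (Q:ℝ) := by linarith
  have hk0 : (0:ℝ) < (k:ℝ) := by exact_mod_cast hk
  have hcancel : (0:ℝ) < E ^ (Q * k) := by positivity
  have hfQ : (0:ℝ) ≤ ((Q)! : ℝ) := by positivity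
  have chain : (k:ℝ)^n * ((Q)! : ℝ)^k * E^(Q*k) ≤ ((n ! : ℝ) * (2*(n:ℝ)*E/(k:ℝ))^(2*k)) * E^(Q*k) := by
    calc (k:ℝ)^n * ((Q)! : ℝ)^k * E^(Q*k)
        = (k:ℝ)^n * (((Q)! : ℝ) * E^Q)^k := by
          rw [mul_pow, pow_mul]
          ring
      _ ≤ (k:ℝ)^n * (E * (Q:ℝ)^(Q+1))^k := by
          have hs := stirU Q hQge1
          gcongr (k:ℝ)^n * ?_^k
      _ = ((k:ℝ)^n * (Q:ℝ)^n) * (E^k * ((Q:ℝ)^(Q*k - n) * (Q:ℝ)^k)) := by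
          rw [mul_pow, ← pow_mul, show (Q+1)*k = (Q*k - n) + n + k from hsplit, pow_add, pow_add]
          ring
      _ ≤ ((k:ℝ)^n * (Q:ℝ)^n) * (E^k * ((Q:ℝ)^k * (Q:ℝ)^k)) := by
          have hpp : (Q:ℝ)^(Q*k - n) ≤ (Q:ℝ)^k := pow_le_pow_right₀ hQ1 hsub
          gcongr
      _ = ((Q:ℝ)*(k:ℝ))^n * (E^k * ((Q:ℝ)^k * (Q:ℝ)^k)) := by
          rw [mul_pow]
          ring
      _ ≤ ((n:ℝ)+(k:ℝ))^n * (E^k * ((Q:ℝ)^k * (Q:ℝ)^k)) := by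
          have hcast : (Q:ℝ)*(k:ℝ) ≤ (n:ℝ)+(k:ℝ) := by exact_mod_cast hQk2
          gcongr ?_^n * _
      _ ≤ ((n:ℝ)^n * E^k) * (E^k * ((Q:ℝ)^k * (Q:ℝ)^k)) := by
          have hg := growth n k hn
          gcongr
      _ ≤ (((n ! : ℝ) * E^n) * E^k) * (E^k * ((Q:ℝ)^k * (Q:ℝ)^k)) := by
          have hl := lowfact n
          gcongr
      _ = ((n ! : ℝ) * (E * (Q:ℝ))^(2*k)) * E^n := by
          rw [two_mul, pow_add, mul_pow]
          ring
      _ ≤ ((n ! : ℝ) * (2*(n:ℝ)*E/(k:ℝ))^(2*k)) * E^(Q*k) := by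
          have h2 : (Q:ℝ) * (k:ℝ) ≤ 2 * (n:ℝ) := by exact_mod_cast hQ2n
          have hEQ : E * (Q:ℝ) ≤ 2*(n:ℝ)*E/(k:ℝ) := by
            rw [le_div_iff₀ hk0]
            nlinarith
          have hEn : E^n ≤ E^(Q*k) := pow_le_pow_right₀ hE1 hQk1
          have hEQ2 : (E * (Q:ℝ))^(2*k) ≤ (2*(n:ℝ)*E/(k:ℝ))^(2*k) := by
            apply pow_le_pow_left₀ (by positivity) hEQ
          gcongr
  exact le_of_mul_le_mul_right chain hcancel

end Stmt14Aux

open Stmt14Aux in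
theorem stmt_14 (n k : ℕ) (hk : 1 ≤ k) (hkn : k ≤ n) :
    (((univ.filter (fun f : Fin n → Fin k =>
        ∀ j : Fin k,
          (univ.filter (fun i => f i = j)).card = n / k ∨
          (univ.filter (fun i => f i = j)).card = (n + k - 1) / k)).card : ℝ) /
        (k : ℝ) ^ n) ≥
      (2 * n * Real.exp 1 / k) ^ (-(2 * (k : ℝ))) := by
  have hn : 0 < n := lt_of_lt_of_le hk hkn
  have hk0 : 0 < k := hk
  set N := (univ.filter (fun f : Fin n → Fin k =>
        ∀ j : Fin k,
          (univ.filter (fun i => f i = j)).card = n / k ∨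
          (univ.filter (fun i => f i = j)).card = (n + k - 1) / k)).card with hN
  have hmain : n ! ≤ N * (n / k + 1)! ^ k := main_count hn hk0
  have hA := master n k hk hkn
  have hk0' : (0:ℝ) < (k:ℝ) := by exact_mod_cast hk0
  have hn0' : (0:ℝ) < (n:ℝ) := by exact_mod_cast hn
  have hE0 : (0:ℝ) < Real.exp 1 := Real.exp_pos 1
  have hx : (0:ℝ) < 2*(n:ℝ)*Real.exp 1/(k:ℝ) := by positivity
  have hQf : (0:ℝ) < ((n / k + 1)! : ℝ)^k := by
    have := Nat.factorial_pos (n / k + 1)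
    positivity
  have hNX : (k:ℝ)^n ≤ (N:ℝ) * (2*(n:ℝ)*Real.exp 1/(k:ℝ))^(2*k) := by
    have h1 : (k:ℝ)^n * ((n/k + 1)! : ℝ)^k
        ≤ ((N:ℝ) * (2*(n:ℝ)*Real.exp 1/(k:ℝ))^(2*k)) * ((n/k + 1)! : ℝ)^k := by
      calc (k:ℝ)^n * ((n/k + 1)! : ℝ)^k ≤ (n ! : ℝ) * (2*(n:ℝ)*Real.exp 1/(k:ℝ))^(2*k) := hA
        _ ≤ ((N:ℝ) * ((n/k + 1)! : ℝ)^k) * (2*(n:ℝ)*Real.exp 1/(k:ℝ))^(2*k) := by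
            apply mul_le_mul_of_nonneg_right _ (by positivity)
            exact_mod_cast hmain
        _ = ((N:ℝ) * (2*(n:ℝ)*Real.exp 1/(k:ℝ))^(2*k)) * ((n/k + 1)! : ℝ)^k := by ring
    exact le_of_mul_le_mul_right h1 hQf
  rw [ge_iff_le, show -(2*(k:ℝ)) = -((2*k : ℕ):ℝ) by push_cast; ring,
    Real.rpow_neg hx.le, Real.rpow_natCast, le_div_iff₀ (by positivity : (0:ℝ) < (k:ℝ)^n),
    inv_mul_le_iff₀ (by positivity)]
  calc (k:ℝ)^n ≤ (N:ℝ) * (2*(n:ℝ)*Real.exp 1/(k:ℝ))^(2*k) := hNX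
    _ = (2*(n:ℝ)*Real.exp 1/(k:ℝ))^(2*k) * (N:ℝ) := by ring
end
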